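/- arXiv:2302.06777 — 4 statements merged into one kernel-verified Lean document; each statement's English description precedes it below -/
import Mathlib

section
/- Let T be a bounded linear operator on a complex Hilbert space H. Then (1/2)ω(T) ≤ ∫₀¹ ω((1−t)T + tT*) dt and (1/2)ω(T) ≤ ∫₀¹ ω((1−t)T* − tT) dt. -/
open ContinuousLinearMap

/-- The numerical radius of a bounded operator on a complex inner product space:
`ω(T) = sup { |⟨Tx, x⟩| : ‖x‖ = 1 }`. -/
noncomputable def numRadius {E : Type*} [NormedAddCommGroup E] [InnerProductSpace ℂ E]
    (T : E →L[ℂ] E) : ℝ :=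
  ⨆ x : { x : E // ‖x‖ = 1 }, ‖(inner ℂ (T x) (x : E) : ℂ)‖

section aux

variable {E : Type*} [NormedAddCommGroup E] [InnerProductSpace ℂ E]

lemma stmt6_inner_bound (T : E →L[ℂ] E) (x : {x : E // ‖x‖ = 1}) :
    ‖(inner ℂ (T x) (x:E) : ℂ)‖ ≤ ‖T‖ := by
  calc ‖(inner ℂ (T x) (x:E) : ℂ)‖ ≤ ‖T (x:E)‖ * ‖(x:E)‖ := norm_inner_le_norm _ _
  _ ≤ ‖T‖ * ‖(x:E)‖ * ‖(x:E)‖ := by gcongr; exact T.le_opNorm _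
  _ = ‖T‖ := by rw [x.2]; ring

lemma stmt6_nr_bdd (T : E →L[ℂ] E) :
    BddAbove (Set.range fun x : {x : E // ‖x‖=1} => ‖(inner ℂ (T x) (x:E) : ℂ)‖) :=
  ⟨‖T‖, by rintro _ ⟨x, rfl⟩; exact stmt6_inner_bound T x⟩

lemma stmt6_le_numRadius (T : E →L[ℂ] E) (x : {x : E // ‖x‖ = 1}) :
    ‖(inner ℂ (T x) (x:E) : ℂ)‖ ≤ numRadius T := le_ciSup (stmt6_nr_bdd T) x

lemma stmt6_numRadius_nonneg (T : E →L[ℂ] E) : 0 ≤ numRadius T :=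
  Real.iSup_nonneg fun _ => norm_nonneg _

lemma stmt6_numRadius_lip (A B : E →L[ℂ] E) : numRadius A ≤ numRadius B + ‖A - B‖ := by
  by_cases h : Nonempty {x : E // ‖x‖ = 1}
  · refine ciSup_le fun x => ?_
    have hx : (inner ℂ (A x) (x:E) : ℂ) = inner ℂ (B x) (x:E) + inner ℂ ((A - B) x) (x:E) := by
      rw [← inner_add_left]; norm_num
    calc ‖(inner ℂ (A x) (x:E) : ℂ)‖
        ≤ ‖(inner ℂ (B x) (x:E) : ℂ)‖ + ‖(inner ℂ ((A-B) x) (x:E) : ℂ)‖ := by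
          rw [hx]; exact norm_add_le _ _
    _ ≤ numRadius B + ‖A - B‖ :=
        add_le_add (stmt6_le_numRadius B x) (stmt6_inner_bound (A-B) x)
  · haveI := not_nonempty_iff.mp h
    simp only [numRadius, Real.iSup_of_isEmpty]
    positivity

lemma stmt6_numRadius_lipschitz : LipschitzWith 1 (numRadius : (E →L[ℂ] E) → ℝ) :=
  LipschitzWith.of_dist_le_mul fun A B => by
    rw [Real.dist_eq, dist_eq_norm, NNReal.coe_one, one_mul]
    have h1 := stmt6_numRadius_lip A B
    have h2 := stmt6_numRadius_lip B A
    have h3 : ‖B - A‖ = ‖A - B‖ := norm_sub_rev _ _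
    rw [abs_le]
    constructor <;> linarith

end aux

lemma stmt6_abs_int_piece1 : ∫ t in (0:ℝ)..(1/2), |1 - 2*t| = 1/4 := by
  have h : ∫ t in (0:ℝ)..(1/2), |1 - 2*t| = ∫ t in (0:ℝ)..(1/2), (1 - 2*t) := by
    apply intervalIntegral.integral_congr
    intro t ht
    rw [Set.uIcc_of_le (by norm_num : (0:ℝ) ≤ 1/2)] at ht
    exact abs_of_nonneg (by linarith [ht.2])
  rw [h, intervalIntegral.integral_sub intervalIntegrable_const
    ((intervalIntegral.intervalIntegrable_id).const_mul 2),
    intervalIntegral.integral_const_mul, integral_id]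
  norm_num

lemma stmt6_abs_int_piece2 : ∫ t in (1/2:ℝ)..1, |1 - 2*t| = 1/4 := by
  have h : ∫ t in (1/2:ℝ)..1, |1 - 2*t| = ∫ t in (1/2:ℝ)..1, (2*t - 1) := by
    apply intervalIntegral.integral_congr
    intro t ht
    rw [Set.uIcc_of_le (by norm_num : (1/2:ℝ) ≤ 1)] at ht
    show |1 - 2*t| = 2*t - 1
    rw [abs_of_nonpos (by linarith [ht.1])]; ring
  rw [h, intervalIntegral.integral_sub
    ((intervalIntegral.intervalIntegrable_id).const_mul 2) intervalIntegrable_const,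
    intervalIntegral.integral_const_mul, integral_id]
  norm_num

lemma stmt6_abs_int : ∫ t in (0:ℝ)..1, |1 - 2*t| = 1/2 := by
  have hc : Continuous fun t : ℝ => |1 - 2*t| := by fun_prop
  rw [← intervalIntegral.integral_add_adjacent_intervals (b := (1/2:ℝ))
    (hc.intervalIntegrable _ _) (hc.intervalIntegrable _ _),
    stmt6_abs_int_piece1, stmt6_abs_int_piece2]
  norm_num

lemma stmt6_key (a b : ℝ) (g : ℝ → ℝ)
    (hg : IntervalIntegrable g MeasureTheory.volume 0 1)
    (hb : ∀ t ∈ Set.Icc (0:ℝ) 1, Real.sqrt (a^2 + (1-2*t)^2 * b^2) ≤ g t) :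
    Real.sqrt (a^2 + b^2) / 2 ≤ ∫ t in (0:ℝ)..1, g t := by
  rcases eq_or_lt_of_le (by positivity : (0:ℝ) ≤ a^2+b^2) with h0 | h0
  · rw [← h0, Real.sqrt_zero]
    norm_num
    apply intervalIntegral.integral_nonneg (by norm_num)
    exact fun t ht => le_trans (Real.sqrt_nonneg _) (hb t ht)
  · set r := Real.sqrt (a^2+b^2) with hr
    have hrpos : 0 < r := Real.sqrt_pos.mpr h0
    have hr2 : r^2 = a^2 + b^2 := Real.sq_sqrt h0.le
    have pointwise : ∀ t ∈ Set.Icc (0:ℝ) 1, (a^2 + |1 - 2*t| * b^2)/r ≤ g t := by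
      intro t ht
      refine le_trans ?_ (hb t ht)
      rw [div_le_iff₀ hrpos]
      have h1 : Real.sqrt (a^2 + (1-2*t)^2*b^2) * r
          = Real.sqrt ((a^2 + (1-2*t)^2*b^2) * (a^2+b^2)) :=
        (Real.sqrt_mul (by positivity) _).symm
      rw [h1]
      rw [show (a^2 + |1 - 2*t| * b^2) = Real.sqrt ((a^2 + |1 - 2*t| * b^2)^2) from
        (Real.sqrt_sq (by positivity)).symm]
      apply Real.sqrt_le_sqrt
      have hu : |1 - 2*t|^2 = (1-2*t)^2 := sq_abs _
      rw [← hu]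
      nlinarith [sq_nonneg (a*b*(1 - |1 - 2*t|)), abs_nonneg (1-2*t), sq_nonneg (a*b)]
    have hint : IntervalIntegrable (fun t => (a^2 + |1 - 2*t| * b^2)/r)
        MeasureTheory.volume 0 1 :=
      ((by fun_prop : Continuous fun t : ℝ => (a^2 + |1 - 2*t| * b^2)/r)).intervalIntegrable _ _
    have hmono := intervalIntegral.integral_mono_on (by norm_num : (0:ℝ) ≤ 1) hint hg pointwise
    have hcalc : ∫ t in (0:ℝ)..1, (a^2 + |1 - 2*t| * b^2)/r = (a^2 + b^2 * (1/2))/r := by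
      have : ∀ t : ℝ, (a^2 + |1 - 2*t| * b^2)/r = a^2/r + (b^2/r) * |1 - 2*t| := by
        intro t; field_simp
      simp_rw [this]
      rw [intervalIntegral.integral_add (intervalIntegrable_const)
        (((by fun_prop : Continuous fun t : ℝ => (b^2/r) * |1 - 2*t|)).intervalIntegrable _ _),
        intervalIntegral.integral_const_mul, stmt6_abs_int, intervalIntegral.integral_const]
      field_simp; linear_combination (2*a^2) * (mul_inv_cancel₀ hrpos.ne' : r * r⁻¹ = 1)
    rw [hcalc] at hmono
    refine le_trans ?_ hmono
    rw [div_le_div_iff₀ (by norm_num) hrpos]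
    nlinarith

lemma stmt6_cnorm1 (z : ℂ) (t : ℝ) :
    ‖((1 - t : ℝ) : ℂ) * z + ((t : ℝ) : ℂ) * (starRingEnd ℂ z)‖
      = Real.sqrt (z.re^2 + (1-2*t)^2 * z.im^2) := by
  rw [Complex.norm_def, Complex.normSq_apply]
  congr 1
  simp [Complex.add_re, Complex.add_im, Complex.mul_re, Complex.mul_im]
  ring

lemma stmt6_cnorm2 (z : ℂ) (t : ℝ) :
    ‖((1 - t : ℝ) : ℂ) * (starRingEnd ℂ z) - ((t : ℝ) : ℂ) * z‖
      = Real.sqrt (z.im^2 + (1-2*t)^2 * z.re^2) := by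
  rw [Complex.norm_def, Complex.normSq_apply]
  congr 1
  simp [Complex.sub_re, Complex.sub_im, Complex.mul_re, Complex.mul_im]
  ring

lemma stmt6_cnorm0 (z : ℂ) : ‖z‖ = Real.sqrt (z.re^2 + z.im^2) := by
  rw [Complex.norm_def, Complex.normSq_apply]
  congr 1
  ring

lemma stmt6_main_aux {H : Type*} [NormedAddCommGroup H] [InnerProductSpace ℂ H]
    (T : H →L[ℂ] H) (A : ℝ → H →L[ℂ] H) (hA : Continuous A)
    (f s : {x : H // ‖x‖ = 1} → ℝ)
    (hnorm : ∀ (t : ℝ) (x : {x : H // ‖x‖ = 1}),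
      ‖(inner ℂ (A t x) (x:H) : ℂ)‖ = Real.sqrt (f x ^ 2 + (1-2*t)^2 * s x ^ 2))
    (hz : ∀ x : {x : H // ‖x‖ = 1},
      ‖(inner ℂ (T x) (x:H) : ℂ)‖ = Real.sqrt (f x ^ 2 + s x ^ 2)) :
    (1/2 : ℝ) * numRadius T ≤ ∫ t in (0:ℝ)..1, numRadius (A t) := by
  have hcont : Continuous fun t => numRadius (A t) :=
    stmt6_numRadius_lipschitz.continuous.comp hA
  have hint : IntervalIntegrable (fun t => numRadius (A t)) MeasureTheory.volume 0 1 :=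
    hcont.intervalIntegrable 0 1
  by_cases hne : Nonempty {x : H // ‖x‖ = 1}
  · have h2 : numRadius T ≤ 2 * ∫ t in (0:ℝ)..1, numRadius (A t) := by
      refine ciSup_le fun x => ?_
      have hk := stmt6_key (f x) (s x) (fun t => numRadius (A t)) hint
        (fun t _ => by rw [← hnorm t x]; exact stmt6_le_numRadius (A t) x)
      rw [hz x]; linarith
    linarith
  · haveI := not_nonempty_iff.mp hne
    have hT : numRadius T = 0 := Real.iSup_of_isEmpty _
    rw [hT, mul_zero]
    exact intervalIntegral.integral_nonneg (by norm_num)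
      fun t _ => stmt6_numRadius_nonneg _

/-- `(1/2)ω(T) ≤ ∫₀¹ ω((1−t)T + tT*) dt` and `(1/2)ω(T) ≤ ∫₀¹ ω((1−t)T* − tT) dt`. -/
theorem stmt_6 {H : Type*} [NormedAddCommGroup H] [InnerProductSpace ℂ H] [CompleteSpace H]
    (T : H →L[ℂ] H) :
    (1 / 2 : ℝ) * numRadius T ≤
        (∫ t in (0:ℝ)..1, numRadius (((1 - t : ℝ) : ℂ) • T + ((t : ℝ) : ℂ) • adjoint T)) ∧
      (1 / 2 : ℝ) * numRadius T ≤
        (∫ t in (0:ℝ)..1, numRadius (((1 - t : ℝ) : ℂ) • adjoint T - ((t : ℝ) : ℂ) • T)) := by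
  have hval1 : ∀ (t : ℝ) (x : H),
      (inner ℂ ((((1 - t : ℝ) : ℂ) • T + ((t : ℝ) : ℂ) • adjoint T) x) x : ℂ)
        = ((1 - t : ℝ) : ℂ) * inner ℂ (T x) x
          + ((t : ℝ) : ℂ) * (starRingEnd ℂ (inner ℂ (T x) x)) := by
    intro t x
    rw [ContinuousLinearMap.add_apply, ContinuousLinearMap.smul_apply,
      ContinuousLinearMap.smul_apply, inner_add_left, inner_smul_left, inner_smul_left,
      adjoint_inner_left, ← inner_conj_symm x (T x)]
    rw [Complex.conj_ofReal, Complex.conj_ofReal]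
  have hval2 : ∀ (t : ℝ) (x : H),
      (inner ℂ ((((1 - t : ℝ) : ℂ) • adjoint T - ((t : ℝ) : ℂ) • T) x) x : ℂ)
        = ((1 - t : ℝ) : ℂ) * (starRingEnd ℂ (inner ℂ (T x) x))
          - ((t : ℝ) : ℂ) * inner ℂ (T x) x := by
    intro t x
    rw [ContinuousLinearMap.sub_apply, ContinuousLinearMap.smul_apply,
      ContinuousLinearMap.smul_apply, inner_sub_left, inner_smul_left, inner_smul_left,
      adjoint_inner_left, ← inner_conj_symm x (T x)]
    rw [Complex.conj_ofReal, Complex.conj_ofReal]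
  constructor
  · refine stmt6_main_aux T _ (by fun_prop)
      (fun x => (inner ℂ (T x) (x:H) : ℂ).re) (fun x => (inner ℂ (T x) (x:H) : ℂ).im)
      (fun t x => ?_) (fun x => stmt6_cnorm0 _)
    rw [hval1 t x, stmt6_cnorm1]
  · refine stmt6_main_aux T _ (by fun_prop)
      (fun x => (inner ℂ (T x) (x:H) : ℂ).im) (fun x => (inner ℂ (T x) (x:H) : ℂ).re)
      (fun t x => ?_) (fun x => by rw [stmt6_cnorm0, add_comm])
    rw [hval2 t x, stmt6_cnorm2]
end

section
/- Let T be a bounded linear operator on a complex Hilbert space H, let 0 ≤ t ≤ 1, and set R = max{t, 1−t}. Then (1/2)‖T‖ + (1/(4R))·(2ω(T) − (ω((1−t)T* − tT) + ω((1−t)T + tT*))) ≤ ω(T). -/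
open ContinuousLinearMap

lemma numRadius_bdd {E : Type*} [NormedAddCommGroup E] [InnerProductSpace ℂ E]
    (T : E →L[ℂ] E) :
    BddAbove (Set.range fun x : { x : E // ‖x‖ = 1 } => ‖(inner ℂ (T x) (x : E) : ℂ)‖) := by
  refine ⟨‖T‖, ?_⟩
  rintro r ⟨⟨x, hx⟩, rfl⟩
  calc ‖(inner ℂ (T x) x : ℂ)‖ ≤ ‖T x‖ * ‖x‖ := norm_inner_le_norm _ _
    _ ≤ (‖T‖ * ‖x‖) * ‖x‖ := by gcongr; exact T.le_opNorm x
    _ = ‖T‖ := by rw [hx]; ring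

lemma le_numRadius {E : Type*} [NormedAddCommGroup E] [InnerProductSpace ℂ E]
    (T : E →L[ℂ] E) {x : E} (hx : ‖x‖ = 1) :
    ‖(inner ℂ (T x) x : ℂ)‖ ≤ numRadius T :=
  le_ciSup (numRadius_bdd T) (⟨x, hx⟩ : { x : E // ‖x‖ = 1 })

lemma numRadius_nonneg {E : Type*} [NormedAddCommGroup E] [InnerProductSpace ℂ E]
    (T : E →L[ℂ] E) : 0 ≤ numRadius T :=
  Real.iSup_nonneg fun _ => norm_nonneg _

lemma numRadius_le {E : Type*} [NormedAddCommGroup E] [InnerProductSpace ℂ E]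
    (T : E →L[ℂ] E) {M : ℝ} (hM : 0 ≤ M)
    (h : ∀ x : E, ‖x‖ = 1 → ‖(inner ℂ (T x) x : ℂ)‖ ≤ M) : numRadius T ≤ M :=
  Real.iSup_le (fun x => h x x.2) hM

lemma inner_le_numRadius_mul_sq {E : Type*} [NormedAddCommGroup E] [InnerProductSpace ℂ E]
    (T : E →L[ℂ] E) (u : E) :
    ‖(inner ℂ (T u) u : ℂ)‖ ≤ numRadius T * ‖u‖ ^ 2 := by
  rcases eq_or_ne u 0 with rfl | hu
  · simp
  · have hn : (0:ℝ) < ‖u‖ := norm_pos_iff.mpr hu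
    have hv : ‖((‖u‖⁻¹ : ℝ) : ℂ) • u‖ = 1 := by
      rw [norm_smul, Complex.norm_real, Real.norm_eq_abs,
        abs_of_nonneg (inv_nonneg.mpr hn.le), inv_mul_cancel₀ hn.ne']
    have h := le_numRadius T hv
    have hcalc : (inner ℂ (T (((‖u‖⁻¹ : ℝ) : ℂ) • u)) (((‖u‖⁻¹ : ℝ) : ℂ) • u) : ℂ)
        = ((‖u‖⁻¹ : ℝ) : ℂ) * ((‖u‖⁻¹ : ℝ) : ℂ) * inner ℂ (T u) u := by
      rw [map_smul, inner_smul_left, inner_smul_right, Complex.conj_ofReal]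
      ring
    rw [hcalc] at h
    have h2 : ‖u‖⁻¹ * ‖u‖⁻¹ * ‖(inner ℂ (T u) u : ℂ)‖ ≤ numRadius T := by
      simpa [norm_mul, Complex.norm_real, Real.norm_eq_abs,
        abs_of_nonneg (inv_nonneg.mpr hn.le), mul_assoc] using h
    have h3 := mul_le_mul_of_nonneg_right h2 (sq_nonneg ‖u‖)
    calc ‖(inner ℂ (T u) u : ℂ)‖ = ‖u‖⁻¹ * ‖u‖⁻¹ * ‖(inner ℂ (T u) u : ℂ)‖ * ‖u‖ ^ 2 := by
          field_simp
      _ ≤ numRadius T * ‖u‖ ^ 2 := h3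

lemma norm_le_numRadius_of_selfAdjoint {E : Type*} [NormedAddCommGroup E]
    [InnerProductSpace ℂ E] [CompleteSpace E] {S : E →L[ℂ] E} (hS : IsSelfAdjoint S) :
    ‖S‖ ≤ numRadius S := by
  set M := numRadius S with hM
  have hM0 : 0 ≤ M := numRadius_nonneg S
  refine S.opNorm_le_bound hM0 fun x => ?_
  rcases eq_or_ne (S x) 0 with h0 | h0
  · rw [h0]; simp; positivity
  have hSx : (0:ℝ) < ‖S x‖ := norm_pos_iff.mpr h0
  have hsym : ∀ v w : E, (inner ℂ (S v) w : ℂ) = starRingEnd ℂ (inner ℂ (S w) v : ℂ) := by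
    intro v w
    rw [← inner_conj_symm, ← ContinuousLinearMap.adjoint_inner_right S, hS.adjoint_eq]
  have key : ∀ y : E, Complex.re (inner ℂ (S x) y : ℂ) ≤ M / 2 * (‖x‖ ^ 2 + ‖y‖ ^ 2) := by
    intro y
    have hpol : (inner ℂ (S (x+y)) (x+y) : ℂ) - inner ℂ (S (x-y)) (x-y)
        = ((4 * Complex.re (inner ℂ (S x) y : ℂ) : ℝ) : ℂ) := by
      simp only [map_add, map_sub, inner_add_left, inner_add_right, inner_sub_left,
        inner_sub_right]
      rw [hsym y x]
      have hac := Complex.add_conj (inner ℂ (S x) y)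
      push_cast at hac ⊢
      linear_combination 2 * hac
    have hre : Complex.re (inner ℂ (S (x+y)) (x+y) : ℂ) - Complex.re (inner ℂ (S (x-y)) (x-y) : ℂ)
        = 4 * Complex.re (inner ℂ (S x) y : ℂ) := by
      have := congrArg Complex.re hpol
      simpa using this
    have b1 : Complex.re (inner ℂ (S (x+y)) (x+y) : ℂ) ≤ M * ‖x+y‖ ^ 2 := by
      calc Complex.re (inner ℂ (S (x+y)) (x+y) : ℂ) ≤ |Complex.re (inner ℂ (S (x+y)) (x+y) : ℂ)| :=
            le_abs_self _
        _ ≤ ‖(inner ℂ (S (x+y)) (x+y) : ℂ)‖ := Complex.abs_re_le_norm _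
        _ ≤ M * ‖x+y‖ ^ 2 := inner_le_numRadius_mul_sq S (x+y)
    have b2 : -(M * ‖x-y‖ ^ 2) ≤ Complex.re (inner ℂ (S (x-y)) (x-y) : ℂ) := by
      have h' : |Complex.re (inner ℂ (S (x-y)) (x-y) : ℂ)| ≤ M * ‖x-y‖ ^ 2 :=
        le_trans (Complex.abs_re_le_norm _) (inner_le_numRadius_mul_sq S (x-y))
      linarith [neg_abs_le (Complex.re (inner ℂ (S (x-y)) (x-y) : ℂ))]
    have hpar : ‖x+y‖ ^ 2 + ‖x-y‖ ^ 2 = 2 * (‖x‖ ^ 2 + ‖y‖ ^ 2) := by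
      have := parallelogram_law_with_norm ℂ x y
      nlinarith [this]
    nlinarith [hre, b1, b2, hpar]
  -- choose y
  set y : E := ((‖x‖ / ‖S x‖ : ℝ) : ℂ) • S x with hy
  have hyn : ‖y‖ = ‖x‖ := by
    rw [hy, norm_smul, Complex.norm_real, Real.norm_eq_abs,
      abs_of_nonneg (by positivity), div_mul_cancel₀ _ hSx.ne']
  have hself : (inner ℂ (S x) (S x) : ℂ) = ((‖S x‖ ^ 2 : ℝ) : ℂ) := by
    rw [inner_self_eq_norm_sq_to_K]; norm_cast
  have hinner : Complex.re (inner ℂ (S x) y : ℂ) = ‖x‖ * ‖S x‖ := by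
    rw [hy, inner_smul_right, hself, ← Complex.ofReal_mul, Complex.ofReal_re]
    field_simp
  have := key y
  rw [hinner, hyn] at this
  -- M/2 * (‖x‖^2 + ‖x‖^2) = M * ‖x‖^2
  rcases eq_or_lt_of_le (norm_nonneg x) with hx0 | hx0
  · exfalso; apply h0; rw [show x = 0 from (norm_eq_zero.mp hx0.symm)]; simp
  · nlinarith [this]

/-- For `0 ≤ t ≤ 1` and `R = max{t, 1−t}`:
`(1/2)‖T‖ + (1/(4R))(2ω(T) − (ω((1−t)T* − tT) + ω((1−t)T + tT*))) ≤ ω(T)`. -/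
theorem stmt_8 {H : Type*} [NormedAddCommGroup H] [InnerProductSpace ℂ H] [CompleteSpace H]
    (T : H →L[ℂ] H) (t R : ℝ) (ht0 : 0 ≤ t) (ht1 : t ≤ 1) (hR : R = max t (1 - t)) :
    (1 / 2 : ℝ) * ‖T‖ +
        (1 / (4 * R)) *
          (2 * numRadius T -
            (numRadius (((1 - t : ℝ) : ℂ) • adjoint T - ((t : ℝ) : ℂ) • T) +
              numRadius (((1 - t : ℝ) : ℂ) • T + ((t : ℝ) : ℂ) • adjoint T))) ≤
      numRadius T := by
  set A := ((1 - t : ℝ) : ℂ) • adjoint T - ((t : ℝ) : ℂ) • T with hA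
  set B := ((1 - t : ℝ) : ℂ) • T + ((t : ℝ) : ℂ) • adjoint T with hB
  set S₁ : H →L[ℂ] H := ((1/2 : ℂ)) • (T + adjoint T) with hS₁
  set S₂ : H →L[ℂ] H := ((Complex.I / 2)) • (T - adjoint T) with hS₂
  have hsa1 : IsSelfAdjoint S₁ := by
    rw [ContinuousLinearMap.isSelfAdjoint_iff']
    rw [hS₁, map_smulₛₗ, map_add, adjoint_adjoint]
    rw [show (starRingEnd ℂ) (1/2 : ℂ) = (1/2 : ℂ) by simp [map_div₀, map_ofNat]]
    rw [add_comm]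
  have hsa2 : IsSelfAdjoint S₂ := by
    rw [ContinuousLinearMap.isSelfAdjoint_iff']
    rw [hS₂, map_smulₛₗ, map_sub, adjoint_adjoint]
    rw [show (starRingEnd ℂ) (Complex.I / 2) = -(Complex.I/2) by
      rw [map_div₀, Complex.conj_I, map_ofNat]; ring]
    rw [neg_smul, smul_sub, smul_sub]
    module
  have hT_decomp : T = S₁ + (-Complex.I) • S₂ := by
    ext x
    simp only [hS₁, hS₂, ContinuousLinearMap.add_apply, ContinuousLinearMap.smul_apply,
      ContinuousLinearMap.sub_apply]
    rw [show (-Complex.I) • ((Complex.I/2) • (T x - adjoint T x))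
        = ((1/2 : ℂ)) • (T x - adjoint T x) by
      rw [smul_smul, show (-Complex.I) * (Complex.I/2) = (1/2 : ℂ) by
        linear_combination (-(1:ℂ)/2) * Complex.I_sq]]
    module
  -- pointwise inner product identities
  have hzstar : ∀ x : H, (inner ℂ ((adjoint T) x) x : ℂ) = starRingEnd ℂ (inner ℂ (T x) x : ℂ) := by
    intro x
    rw [ContinuousLinearMap.adjoint_inner_left, ← inner_conj_symm]
  have hS1x : ∀ x : H, (inner ℂ (S₁ x) x : ℂ) = ((Complex.re (inner ℂ (T x) x : ℂ) : ℝ) : ℂ) := by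
    intro x
    rw [hS₁]
    simp only [ContinuousLinearMap.smul_apply, ContinuousLinearMap.add_apply,
      inner_smul_left, inner_add_left, hzstar x]
    rw [Complex.add_conj, map_div₀, map_one, map_ofNat]
    push_cast
    ring
  have hS2x : ∀ x : H, (inner ℂ (S₂ x) x : ℂ) = ((Complex.im (inner ℂ (T x) x : ℂ) : ℝ) : ℂ) := by
    intro x
    rw [hS₂]
    simp only [ContinuousLinearMap.smul_apply, ContinuousLinearMap.sub_apply,
      inner_smul_left, inner_sub_left, hzstar x]
    rw [Complex.sub_conj, map_div₀, Complex.conj_I, map_ofNat]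
    push_cast
    linear_combination (-(Complex.ofReal (Complex.im (inner ℂ (T x) x : ℂ)))) * Complex.I_sq
  have hAx : ∀ x : H, Complex.im (inner ℂ (A x) x : ℂ) = -Complex.im (inner ℂ (T x) x : ℂ) := by
    intro x
    rw [hA]
    simp only [ContinuousLinearMap.sub_apply, ContinuousLinearMap.smul_apply,
      inner_sub_left, inner_smul_left, hzstar x, Complex.conj_ofReal]
    simp only [Complex.sub_im, Complex.mul_im, Complex.conj_im, Complex.conj_re,
      Complex.ofReal_re, Complex.ofReal_im]
    ring
  have hBx : ∀ x : H, Complex.re (inner ℂ (B x) x : ℂ) = Complex.re (inner ℂ (T x) x : ℂ) := by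
    intro x
    rw [hB]
    simp only [ContinuousLinearMap.add_apply, ContinuousLinearMap.smul_apply,
      inner_add_left, inner_smul_left, hzstar x, Complex.conj_ofReal]
    simp only [Complex.add_re, Complex.mul_re, Complex.conj_im, Complex.conj_re,
      Complex.ofReal_re, Complex.ofReal_im]
    ring
  -- numerical radius comparisons
  have hω0 : 0 ≤ numRadius T := numRadius_nonneg T
  have ha0 : 0 ≤ numRadius A := numRadius_nonneg A
  have hb0 : 0 ≤ numRadius B := numRadius_nonneg B
  have hPω : numRadius S₁ ≤ numRadius T := by
    refine numRadius_le S₁ hω0 fun x hx => ?_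
    rw [hS1x x]
    calc ‖((Complex.re (inner ℂ (T x) x : ℂ) : ℝ) : ℂ)‖
        = |Complex.re (inner ℂ (T x) x : ℂ)| := by rw [Complex.norm_real, Real.norm_eq_abs]
      _ ≤ ‖(inner ℂ (T x) x : ℂ)‖ := Complex.abs_re_le_norm _
      _ ≤ numRadius T := le_numRadius T hx
  have hQω : numRadius S₂ ≤ numRadius T := by
    refine numRadius_le S₂ hω0 fun x hx => ?_
    rw [hS2x x]
    calc ‖((Complex.im (inner ℂ (T x) x : ℂ) : ℝ) : ℂ)‖
        = |Complex.im (inner ℂ (T x) x : ℂ)| := by rw [Complex.norm_real, Real.norm_eq_abs]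
      _ ≤ ‖(inner ℂ (T x) x : ℂ)‖ := Complex.abs_im_le_norm _
      _ ≤ numRadius T := le_numRadius T hx
  have hQa : numRadius S₂ ≤ numRadius A := by
    refine numRadius_le S₂ ha0 fun x hx => ?_
    rw [hS2x x]
    calc ‖((Complex.im (inner ℂ (T x) x : ℂ) : ℝ) : ℂ)‖
        = |Complex.im (inner ℂ (T x) x : ℂ)| := by rw [Complex.norm_real, Real.norm_eq_abs]
      _ = |Complex.im (inner ℂ (A x) x : ℂ)| := by rw [hAx x, abs_neg]
      _ ≤ ‖(inner ℂ (A x) x : ℂ)‖ := Complex.abs_im_le_norm _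
      _ ≤ numRadius A := le_numRadius A hx
  have hPb : numRadius S₁ ≤ numRadius B := by
    refine numRadius_le S₁ hb0 fun x hx => ?_
    rw [hS1x x]
    calc ‖((Complex.re (inner ℂ (T x) x : ℂ) : ℝ) : ℂ)‖
        = |Complex.re (inner ℂ (T x) x : ℂ)| := by rw [Complex.norm_real, Real.norm_eq_abs]
      _ = |Complex.re (inner ℂ (B x) x : ℂ)| := by rw [hBx x]
      _ ≤ ‖(inner ℂ (B x) x : ℂ)‖ := Complex.abs_re_le_norm _
      _ ≤ numRadius B := le_numRadius B hx
  have hTnorm : ‖T‖ ≤ numRadius S₁ + numRadius S₂ := by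
    calc ‖T‖ = ‖S₁ + (-Complex.I) • S₂‖ := by rw [← hT_decomp]
      _ ≤ ‖S₁‖ + ‖(-Complex.I) • S₂‖ := norm_add_le _ _
      _ = ‖S₁‖ + ‖S₂‖ := by
          congr 1
          rw [norm_smul, norm_neg, Complex.norm_I, one_mul]
      _ ≤ numRadius S₁ + numRadius S₂ :=
          add_le_add (norm_le_numRadius_of_selfAdjoint hsa1)
            (norm_le_numRadius_of_selfAdjoint hsa2)
  -- algebra
  set s : ℝ := |1 - 2*t| with hs
  have hs0 : 0 ≤ s := abs_nonneg _
  have hRs : R = (1 + s)/2 := by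
    rcases le_total t (1/2) with h | h
    · rw [hR, max_eq_right (by linarith), hs, abs_of_nonneg (by linarith)]; ring
    · rw [hR, max_eq_left (by linarith), hs, abs_of_nonpos (by linarith)]; ring
  have hRpos : 0 < R := by rw [hRs]; linarith
  set ω := numRadius T
  set P := numRadius S₁
  set Q := numRadius S₂
  have h1 : (1 / (4 * R)) * (2 * ω - (numRadius A + numRadius B))
      ≤ (1 / (4 * R)) * (2 * ω - (P + Q)) := by
    apply mul_le_mul_of_nonneg_left (by linarith) (by positivity)
  have h2 : (1 / 2 : ℝ) * ‖T‖ + (1 / (4 * R)) * (2 * ω - (P + Q)) ≤ ω := by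
    have h4R : 4 * R = 2 * (1 + s) := by rw [hRs]; ring
    rw [h4R, ← sub_nonneg]
    have expand : ω - ((1 / 2 : ℝ) * ‖T‖ + (1 / (2 * (1 + s))) * (2 * ω - (P + Q)))
        = (1 / (2 * (1 + s))) * ((2 * (1 + s)) * ω - (1 + s) * ‖T‖ - (2 * ω - (P + Q))) := by
      field_simp
      ring
    rw [expand]
    apply mul_nonneg (by positivity)
    nlinarith [mul_nonneg hs0 (sub_nonneg.mpr hTnorm), mul_nonneg hs0 (sub_nonneg.mpr hPω),
      mul_nonneg hs0 (sub_nonneg.mpr hQω), hTnorm, hPω, hQω]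
  linarith [h1, h2]
end

section
/- Let A and B be bounded linear operators on a complex Hilbert space H. Then ω([[O, A],[B, O]]) ≤ sqrt( max{ω(AB), ω(BA)} + inf over λ ∈ ℂ of ‖[[−λI, A],[B, −λI]]‖² ), where [[−λI, A],[B, −λI]] is the operator on H ⊕ H sending (x, y) to (−λx + Ay, Bx − λy). -/
open ContinuousLinearMap

/-- The block operator `[[O, A], [B, O]]` on the Hilbert space direct sum `H ⊕₂ H`,
sending `(x, y)` to `(A y, B x)`. -/
noncomputable def blockOp {H : Type*} [NormedAddCommGroup H] [InnerProductSpace ℂ H]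
    (A B : H →L[ℂ] H) : WithLp 2 (H × H) →L[ℂ] WithLp 2 (H × H) :=
  ((WithLp.prodContinuousLinearEquiv 2 ℂ H H).symm : (H × H) →L[ℂ] WithLp 2 (H × H)) ∘L
    ((A ∘L ContinuousLinearMap.snd ℂ H H).prod (B ∘L ContinuousLinearMap.fst ℂ H H)) ∘L
    ((WithLp.prodContinuousLinearEquiv 2 ℂ H H) : WithLp 2 (H × H) →L[ℂ] H × H)

section Aux

variable {E : Type*} [NormedAddCommGroup E] [InnerProductSpace ℂ E]

lemma numRadius_bddAbove (T : E →L[ℂ] E) :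
    BddAbove (Set.range fun x : { x : E // ‖x‖ = 1 } => ‖(inner ℂ (T x) (x : E) : ℂ)‖) := by
  refine ⟨‖T‖, ?_⟩
  rintro r ⟨u, rfl⟩
  calc ‖(inner ℂ (T u) (u : E) : ℂ)‖ ≤ ‖T (u : E)‖ * ‖(u : E)‖ := norm_inner_le_norm _ _
    _ ≤ ‖T‖ * ‖(u : E)‖ * ‖(u : E)‖ := by
        gcongr; exact T.le_opNorm _
    _ = ‖T‖ := by rw [u.2]; ring

lemma norm_inner_le_numRadius (T : E →L[ℂ] E) (x : E) :
    ‖(inner ℂ (T x) x : ℂ)‖ ≤ numRadius T * ‖x‖ ^ 2 := by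
  rcases eq_or_ne x 0 with rfl | hx
  · simp
  · have hxn : ‖x‖ ≠ 0 := norm_ne_zero_iff.mpr hx
    set c : ℂ := (‖x‖ : ℂ)⁻¹ with hcdef
    have hcnorm : ‖c‖ = ‖x‖⁻¹ := by
      simp [hcdef]
    have hcu : ‖c • x‖ = 1 := by
      rw [norm_smul, hcnorm, inv_mul_cancel₀ hxn]
    have h1 : ‖(inner ℂ (T (c • x)) (c • x) : ℂ)‖ ≤ numRadius T :=
      le_ciSup (numRadius_bddAbove T) ⟨c • x, hcu⟩
    have h2 : (inner ℂ (T (c • x)) (c • x) : ℂ) = (starRingEnd ℂ) c * (c * inner ℂ (T x) x) := by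
      rw [map_smul, inner_smul_left, inner_smul_right]
    have h3 : ‖(starRingEnd ℂ) c * (c * inner ℂ (T x) x)‖ =
        ‖x‖⁻¹ * (‖x‖⁻¹ * ‖(inner ℂ (T x) x : ℂ)‖) := by
      rw [norm_mul, norm_mul, RCLike.norm_conj, hcnorm]
    rw [h2, h3] at h1
    have h4 := mul_le_mul_of_nonneg_right h1 (sq_nonneg ‖x‖)
    have h5 : ‖x‖⁻¹ * (‖x‖⁻¹ * ‖(inner ℂ (T x) x : ℂ)‖) * ‖x‖ ^ 2 = ‖(inner ℂ (T x) x : ℂ)‖ := by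
      calc ‖x‖⁻¹ * (‖x‖⁻¹ * ‖(inner ℂ (T x) x : ℂ)‖) * ‖x‖ ^ 2
          = (‖x‖⁻¹ * ‖x‖) * ((‖x‖⁻¹ * ‖x‖) * ‖(inner ℂ (T x) x : ℂ)‖) := by ring
        _ = ‖(inner ℂ (T x) x : ℂ)‖ := by rw [inv_mul_cancel₀ hxn]; ring
    linarith [h4, h5.symm.le]

lemma key_ineq (T : E →L[ℂ] E) (z : E) (hz : ‖z‖ = 1) (lam : ℂ) :
    ‖(inner ℂ (T z) z : ℂ)‖ ^ 2 ≤ ‖(inner ℂ (T (T z)) z : ℂ)‖ + ‖T - lam • 1‖ ^ 2 := by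
  set S : E →L[ℂ] E := T - lam • 1 with hSdef
  have hS : ∀ w, S w = T w - lam • w := fun w => by
    simp [hSdef, sub_apply, smul_apply, one_apply]
  set c : ℂ := inner ℂ z (T z) with hc
  set d : ℂ := inner ℂ z (S z) with hd
  have hzz : (inner ℂ z z : ℂ) = 1 := by
    rw [inner_self_eq_norm_sq_to_K, hz]; norm_num
  have hdc : d = c - lam := by
    rw [hd, hS, inner_sub_right, inner_smul_right, hzz, mul_one, hc]
  -- S (S z)
  have hSS : (inner ℂ z (S (S z)) : ℂ) = inner ℂ z (T (T z)) - 2 * lam * c + lam ^ 2 := by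
    rw [hS (S z), hS z, map_sub, map_smul, inner_sub_right, inner_sub_right,
      inner_smul_right, inner_smul_right, inner_sub_right, inner_smul_right, hzz, hc]
    ring
  -- key identity
  have e1 : (inner ℂ z (S (d • z - S z)) : ℂ) = d * d - inner ℂ z (S (S z)) := by
    rw [map_sub, map_smul, inner_sub_right, inner_smul_right, ← hd]
  have keyid : c ^ 2 = (inner ℂ z (S (d • z - S z)) : ℂ) + inner ℂ z (T (T z)) := by
    rw [e1, hSS, hdc]; ring
  -- bound ‖d • z - S z‖ ≤ ‖S‖
  have horth : ‖S z - d • z‖ ^ 2 = ‖S z‖ ^ 2 - ‖d‖ ^ 2 := by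
    have hinner_eq : (inner ℂ (S z) (d • z) : ℂ) = d * (starRingEnd ℂ) d := by
      rw [inner_smul_right, ← inner_conj_symm, ← hd]
    have hnsq : (Complex.normSq d : ℝ) = ‖d‖ ^ 2 := by
      rw [Complex.normSq_eq_norm_sq]
    have hre : RCLike.re (inner ℂ (S z) (d • z) : ℂ) = ‖d‖ ^ 2 := by
      rw [hinner_eq, Complex.mul_conj, hnsq]
      simp [RCLike.re_to_complex, ← Complex.ofReal_pow]
    rw [@norm_sub_sq ℂ, hre, norm_smul, hz, mul_one]
    ring
  have hwle : ‖d • z - S z‖ ≤ ‖S‖ := by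
    have h1 : ‖d • z - S z‖ = ‖S z - d • z‖ := by rw [norm_sub_rev]
    have h2 : ‖S z‖ ≤ ‖S‖ := by
      calc ‖S z‖ ≤ ‖S‖ * ‖z‖ := S.le_opNorm z
        _ = ‖S‖ := by rw [hz, mul_one]
    nlinarith [norm_nonneg (S z - d • z), norm_nonneg S, norm_nonneg (S z)]
  have hb1 : ‖(inner ℂ z (S (d • z - S z)) : ℂ)‖ ≤ ‖S‖ ^ 2 := by
    calc ‖(inner ℂ z (S (d • z - S z)) : ℂ)‖ ≤ ‖z‖ * ‖S (d • z - S z)‖ := norm_inner_le_norm _ _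
      _ = ‖S (d • z - S z)‖ := by rw [hz, one_mul]
      _ ≤ ‖S‖ * ‖d • z - S z‖ := S.le_opNorm _
      _ ≤ ‖S‖ * ‖S‖ := mul_le_mul_of_nonneg_left hwle (norm_nonneg S)
      _ = ‖S‖ ^ 2 := by ring
  have hcn : ‖(inner ℂ (T z) z : ℂ)‖ = ‖c‖ := by rw [hc]; exact norm_inner_symm _ _
  have hTTn : ‖(inner ℂ (T (T z)) z : ℂ)‖ = ‖(inner ℂ z (T (T z)) : ℂ)‖ := norm_inner_symm _ _
  rw [hcn, hTTn]
  calc ‖c‖ ^ 2 = ‖c ^ 2‖ := by rw [norm_pow]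
    _ = ‖(inner ℂ z (S (d • z - S z)) : ℂ) + inner ℂ z (T (T z))‖ := by rw [keyid]
    _ ≤ ‖(inner ℂ z (S (d • z - S z)) : ℂ)‖ + ‖(inner ℂ z (T (T z)) : ℂ)‖ := norm_add_le _ _
    _ ≤ ‖S‖ ^ 2 + ‖(inner ℂ z (T (T z)) : ℂ)‖ := by gcongr
    _ = ‖(inner ℂ z (T (T z)) : ℂ)‖ + ‖T - lam • 1‖ ^ 2 := by rw [hSdef]; ring

end Aux

/-- `ω([[O,A],[B,O]]) ≤ sqrt( max{ω(AB), ω(BA)} + inf_{λ ∈ ℂ} ‖[[−λI,A],[B,−λI]]‖² )`. -/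
theorem stmt_18 {H : Type*} [NormedAddCommGroup H] [InnerProductSpace ℂ H] [CompleteSpace H]
    (A B : H →L[ℂ] H) :
    numRadius (blockOp A B) ≤
      Real.sqrt
        (max (numRadius (A * B)) (numRadius (B * A)) +
          ⨅ lam : ℂ, ‖blockOp A B - lam • 1‖ ^ 2) := by
  set T := blockOp A B with hT
  set M := max (numRadius (A * B)) (numRadius (B * A)) with hM
  have hTapp : ∀ w : WithLp 2 (H × H), T w = (WithLp.equiv 2 (H × H)).symm (A w.snd, B w.fst) :=
    fun w => rfl
  -- the crucial squared bound for each unit vector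
  have main : ∀ z : { x : WithLp 2 (H × H) // ‖x‖ = 1 },
      ‖(inner ℂ (T z) (z : WithLp 2 (H × H)) : ℂ)‖ ^ 2 ≤ M + ⨅ lam : ℂ, ‖T - lam • 1‖ ^ 2 := by
    intro z
    have hzn : ‖(z : WithLp 2 (H × H))‖ = 1 := z.2
    have hsum : ‖(z : WithLp 2 (H × H)).fst‖ ^ 2 + ‖(z : WithLp 2 (H × H)).snd‖ ^ 2 = 1 := by
      rw [← WithLp.prod_norm_sq_eq_of_L2, hzn]; norm_num
    -- bound on the T² term
    have hTT : ‖(inner ℂ (T (T (z : WithLp 2 (H × H)))) (z : WithLp 2 (H × H)) : ℂ)‖ ≤ M := by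
      have hfst : (T (T (z : WithLp 2 (H × H)))).fst = (A * B) (z : WithLp 2 (H × H)).fst := rfl
      have hsnd : (T (T (z : WithLp 2 (H × H)))).snd = (B * A) (z : WithLp 2 (H × H)).snd := rfl
      have hinner : (inner ℂ (T (T (z : WithLp 2 (H × H)))) (z : WithLp 2 (H × H)) : ℂ) =
          inner ℂ ((A * B) (z : WithLp 2 (H × H)).fst) (z : WithLp 2 (H × H)).fst +
            inner ℂ ((B * A) (z : WithLp 2 (H × H)).snd) (z : WithLp 2 (H × H)).snd := by
        rw [WithLp.prod_inner_apply]; rfl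
      have h1 : ‖(inner ℂ ((A * B) (z : WithLp 2 (H × H)).fst) (z : WithLp 2 (H × H)).fst : ℂ)‖ ≤
          numRadius (A * B) * ‖(z : WithLp 2 (H × H)).fst‖ ^ 2 := norm_inner_le_numRadius _ _
      have h2 : ‖(inner ℂ ((B * A) (z : WithLp 2 (H × H)).snd) (z : WithLp 2 (H × H)).snd : ℂ)‖ ≤
          numRadius (B * A) * ‖(z : WithLp 2 (H × H)).snd‖ ^ 2 := norm_inner_le_numRadius _ _
      have hAB : numRadius (A * B) ≤ M := le_max_left _ _
      have hBA : numRadius (B * A) ≤ M := le_max_right _ _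
      calc ‖(inner ℂ (T (T (z : WithLp 2 (H × H)))) (z : WithLp 2 (H × H)) : ℂ)‖
          ≤ ‖(inner ℂ ((A * B) (z : WithLp 2 (H × H)).fst) (z : WithLp 2 (H × H)).fst : ℂ)‖ +
            ‖(inner ℂ ((B * A) (z : WithLp 2 (H × H)).snd) (z : WithLp 2 (H × H)).snd : ℂ)‖ := by
            rw [hinner]; exact norm_add_le _ _
        _ ≤ numRadius (A * B) * ‖(z : WithLp 2 (H × H)).fst‖ ^ 2 +
            numRadius (B * A) * ‖(z : WithLp 2 (H × H)).snd‖ ^ 2 := add_le_add h1 h2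
        _ ≤ M * ‖(z : WithLp 2 (H × H)).fst‖ ^ 2 + M * ‖(z : WithLp 2 (H × H)).snd‖ ^ 2 :=
            add_le_add (mul_le_mul_of_nonneg_right hAB (sq_nonneg _))
              (mul_le_mul_of_nonneg_right hBA (sq_nonneg _))
        _ = M := by rw [← mul_add, hsum, mul_one]
    have hlam : ∀ lam : ℂ,
        ‖(inner ℂ (T z) (z : WithLp 2 (H × H)) : ℂ)‖ ^ 2 - M ≤ ‖T - lam • 1‖ ^ 2 := by
      intro lam
      have := key_ineq T (z : WithLp 2 (H × H)) hzn lam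
      linarith
    have hinf : ‖(inner ℂ (T z) (z : WithLp 2 (H × H)) : ℂ)‖ ^ 2 - M ≤
        ⨅ lam : ℂ, ‖T - lam • 1‖ ^ 2 := le_ciInf hlam
    linarith
  -- wrap up with sqrt
  refine Real.iSup_le (fun z => ?_) (Real.sqrt_nonneg _)
  have h := main z
  calc ‖(inner ℂ (T z) (z : WithLp 2 (H × H)) : ℂ)‖
      = Real.sqrt (‖(inner ℂ (T z) (z : WithLp 2 (H × H)) : ℂ)‖ ^ 2) := by
        rw [Real.sqrt_sq (norm_nonneg _)]
    _ ≤ Real.sqrt (M + ⨅ lam : ℂ, ‖T - lam • 1‖ ^ 2) := Real.sqrt_le_sqrt h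
end

section
/- Let A and B be bounded linear operators on a complex Hilbert space H. Then max{‖ℑA − ℑB‖, ‖ℜA − ℜB‖} + max{‖ℜA + ℜB‖, ‖ℑA + ℑB‖} ≤ ‖A + B‖ + ‖A − B‖ ≤ 4ω([[O, A],[B*, O]]). -/
open ContinuousLinearMap

section Aux

variable {H : Type*} [NormedAddCommGroup H] [InnerProductSpace ℂ H]

lemma aux_numRadius_nonneg (T : H →L[ℂ] H) : 0 ≤ numRadius T :=
  Real.iSup_nonneg fun _ => norm_nonneg _

lemma aux_le_numRadius (T : H →L[ℂ] H) {x : H} (hx : ‖x‖ = 1) :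
    ‖(inner ℂ (T x) x : ℂ)‖ ≤ numRadius T := by
  refine le_ciSup (f := fun x : { x : H // ‖x‖ = 1 } => ‖(inner ℂ (T x) (x : H) : ℂ)‖)
    ⟨‖T‖, ?_⟩ ⟨x, hx⟩
  rintro r ⟨⟨y, hy⟩, rfl⟩
  calc ‖(inner ℂ (T y) y : ℂ)‖ ≤ ‖T y‖ * ‖y‖ := norm_inner_le_norm _ _
    _ ≤ (‖T‖ * ‖y‖) * ‖y‖ := by
        have := T.le_opNorm y
        nlinarith [norm_nonneg y]
    _ = ‖T‖ := by rw [hy]; ring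

variable [CompleteSpace H]

lemma aux_im_le (T : H →L[ℂ] H) : ‖(2 * Complex.I)⁻¹ • (T - adjoint T)‖ ≤ ‖T‖ := by
  rw [norm_smul]
  have h1 : ‖(2 * Complex.I)⁻¹‖ = 2⁻¹ := by simp
  have h2 : ‖T - adjoint T‖ ≤ 2 * ‖T‖ := by
    calc ‖T - adjoint T‖ ≤ ‖T‖ + ‖adjoint T‖ := norm_sub_le _ _
      _ = 2 * ‖T‖ := by rw [LinearIsometryEquiv.norm_map]; ring
  rw [h1]; linarith

lemma aux_re_le (T : H →L[ℂ] H) : ‖(2 : ℂ)⁻¹ • (T + adjoint T)‖ ≤ ‖T‖ := by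
  rw [norm_smul]
  have h1 : ‖(2 : ℂ)⁻¹‖ = 2⁻¹ := by simp
  have h2 : ‖T + adjoint T‖ ≤ 2 * ‖T‖ := by
    calc ‖T + adjoint T‖ ≤ ‖T‖ + ‖adjoint T‖ := norm_add_le _ _
      _ = 2 * ‖T‖ := by rw [LinearIsometryEquiv.norm_map]; ring
  rw [h1]; linarith

/-- Inner product of `blockOp A (adjoint B)` against the test vector. -/
lemma aux_blockOp_inner (A B : H →L[ℂ] H) (x y : H) (s c : ℂ) :
    (inner ℂ ((blockOp A (adjoint B)) ((WithLp.equiv 2 (H × H)).symm (s • x, s • c • y)))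
        ((WithLp.equiv 2 (H × H)).symm (s • x, s • c • y)) : ℂ)
      = starRingEnd ℂ s * s * (starRingEnd ℂ c * inner ℂ (A y) x
          + c * starRingEnd ℂ (inner ℂ (B y) x : ℂ)) := by
  have hB : (inner ℂ ((adjoint B) x) y : ℂ) = starRingEnd ℂ (inner ℂ (B y) x : ℂ) := by
    rw [adjoint_inner_left, inner_conj_symm]
  simp [blockOp, WithLp.prod_inner_apply, inner_smul_left, inner_smul_right, map_smul, hB]
  ring

set_option maxHeartbeats 1000000 in
/-- Key inequality: for unit vectors `x, y`,
`|⟨Ay, x⟩| + |⟨By, x⟩| ≤ 2 ω([[O,A],[B*,O]])`. -/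
lemma aux_key (A B : H →L[ℂ] H) {x y : H} (hx : ‖x‖ = 1) (hy : ‖y‖ = 1) :
    ‖(inner ℂ (A y) x : ℂ)‖ + ‖(inner ℂ (B y) x : ℂ)‖
      ≤ 2 * numRadius (blockOp A (adjoint B)) := by
  set a : ℂ := inner ℂ (A y) x with ha
  set b : ℂ := inner ℂ (B y) x with hb
  set u : ℂ := if a = 0 then 1 else a / ‖a‖ with hu
  set v : ℂ := if b = 0 then 1 else b / ‖b‖ with hv
  have hu1 : ‖u‖ = 1 := by
    rcases eq_or_ne a 0 with h | h
    · simp [hu, h]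
    · simp [hu, h, norm_div, norm_ne_zero_iff.2 h]
  have hv1 : ‖v‖ = 1 := by
    rcases eq_or_ne b 0 with h | h
    · simp [hv, h]
    · simp [hv, h, norm_div, norm_ne_zero_iff.2 h]
  have hua : u * ‖a‖ = a := by
    rcases eq_or_ne a 0 with h | h
    · simp [h]
    · rw [hu, if_neg h, div_mul_cancel₀]; exact_mod_cast norm_ne_zero_iff.2 h
  have hvb : v * ‖b‖ = b := by
    rcases eq_or_ne b 0 with h | h
    · simp [h]
    · rw [hv, if_neg h, div_mul_cancel₀]; exact_mod_cast norm_ne_zero_iff.2 h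
  set c : ℂ := Complex.exp ((((u * v).arg / 2 : ℝ) : ℂ) * Complex.I) with hc
  have hc1 : ‖c‖ = 1 := Complex.norm_exp_ofReal_mul_I _
  have hcc : c * c = u * v := by
    rw [hc, ← Complex.exp_add]
    have h1 : (((u*v).arg / 2 : ℝ) : ℂ) * Complex.I + (((u*v).arg / 2 : ℝ) : ℂ) * Complex.I
        = ((u*v).arg : ℂ) * Complex.I := by push_cast; ring
    rw [h1]
    have h2 := Complex.norm_mul_exp_arg_mul_I (u * v)
    have h3 : ‖u * v‖ = 1 := by
      rw [norm_mul]; simp_all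
    rw [h3] at h2; simpa using h2
  set s : ℂ := ((Real.sqrt 2 : ℝ)⁻¹ : ℂ) with hs
  set z : WithLp 2 (H × H) := (WithLp.equiv 2 (H × H)).symm (s • x, s • c • y) with hzdef
  have hz : ‖z‖ = 1 := by
    have hsn : ‖s‖ = (Real.sqrt 2)⁻¹ := by
      simp [hs, abs_of_nonneg, Real.sqrt_nonneg]
    have h1 : ‖z‖ ^ 2 = ‖s • x‖ ^ 2 + ‖s • c • y‖ ^ 2 := by
      rw [WithLp.prod_norm_sq_eq_of_L2]; rfl
    have h2 : ‖z‖ ^ 2 = 1 := by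
      rw [h1, norm_smul, norm_smul, norm_smul, hsn, hx, hy, hc1]
      have : Real.sqrt 2 ^ 2 = 2 := Real.sq_sqrt (by norm_num)
      field_simp
      linarith
    nlinarith [norm_nonneg z]
  have hip : (inner ℂ ((blockOp A (adjoint B)) z) z : ℂ)
      = starRingEnd ℂ s * s * (starRingEnd ℂ c * a + c * starRingEnd ℂ b) := by
    have := aux_blockOp_inner A B x y s c
    rw [← ha, ← hb] at this
    rw [hzdef]
    exact this
  -- algebraic identity: conj c * a + c * conj b = conj c * u * (‖a‖ + ‖b‖)
  have hcmul : c * starRingEnd ℂ c = 1 := by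
    have := Complex.mul_conj c
    rw [Complex.normSq_eq_norm_sq] at this
    rw [this]
    simp only [hc1]
    simp_all
  have hvmul : v * starRingEnd ℂ v = 1 := by
    have := Complex.mul_conj v
    rw [Complex.normSq_eq_norm_sq] at this
    rw [this]
    simp_all
  have halg : starRingEnd ℂ c * a + c * starRingEnd ℂ b
      = starRingEnd ℂ c * u * ((‖a‖ : ℂ) + (‖b‖ : ℂ)) := by
    have hb' : starRingEnd ℂ b = starRingEnd ℂ v * ‖b‖ := by
      have h0 := congrArg (starRingEnd ℂ) hvb.symm
      rw [map_mul, Complex.conj_ofReal] at h0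
      exact h0
    have hkey : c * starRingEnd ℂ v = starRingEnd ℂ c * u := by
      linear_combination (starRingEnd ℂ c * starRingEnd ℂ v) * hcc
        - (c * starRingEnd ℂ v) * hcmul + (starRingEnd ℂ c * u) * hvmul
    linear_combination (-(starRingEnd ℂ c)) * hua + c * hb' + ((‖b‖ : ℂ)) * hkey
  have hnorm : ‖(inner ℂ ((blockOp A (adjoint B)) z) z : ℂ)‖ = (‖a‖ + ‖b‖) / 2 := by
    rw [hip, halg]
    have hss : starRingEnd ℂ s * s = (2 : ℂ)⁻¹ := by
      have h0 : s = (((Real.sqrt 2)⁻¹ : ℝ) : ℂ) := by rw [hs]; push_cast; ring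
      rw [h0, Complex.conj_ofReal, ← Complex.ofReal_mul]
      have h1 : (Real.sqrt 2)⁻¹ * (Real.sqrt 2)⁻¹ = 2⁻¹ := by
        rw [← mul_inv]
        congr 1
        exact Real.mul_self_sqrt (by norm_num)
      rw [h1]; push_cast; ring
    rw [hss, norm_mul, norm_mul, norm_mul]
    simp only [RCLike.norm_conj, hc1, hu1]
    have h2 : ‖(2 : ℂ)⁻¹‖ = 2⁻¹ := by simp
    rw [h2]
    have hab : ‖((‖a‖ : ℂ) + (‖b‖ : ℂ))‖ = ‖a‖ + ‖b‖ := by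
      rw [← Complex.ofReal_add, Complex.norm_real]
      exact abs_of_nonneg (by positivity)
    rw [hab]; ring
  have := aux_le_numRadius (blockOp A (adjoint B)) hz
  rw [hnorm] at this
  linarith

lemma aux_opnorm_le (T : H →L[ℂ] H) (M : ℝ) (hM : 0 ≤ M)
    (h : ∀ x y : H, ‖x‖ = 1 → ‖y‖ = 1 → ‖(inner ℂ (T y) x : ℂ)‖ ≤ M) : ‖T‖ ≤ M := by
  refine opNorm_le_bound _ hM fun y => ?_
  rcases eq_or_ne y 0 with rfl | hy
  · simp
  · have hyn : ‖y‖ ≠ 0 := norm_ne_zero_iff.2 hy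
    set y' : H := ((‖y‖ : ℂ))⁻¹ • y with hy'
    have hy'1 : ‖y'‖ = 1 := by
      rw [hy', norm_smul]
      simp [hyn]
    have hTy' : ‖T y'‖ ≤ M := by
      rcases eq_or_ne (T y') 0 with h0 | h0
      · simp [h0, hM]
      · have hTn : ‖T y'‖ ≠ 0 := norm_ne_zero_iff.2 h0
        set x : H := ((‖T y'‖ : ℂ))⁻¹ • T y' with hxdef
        have hx1 : ‖x‖ = 1 := by
          rw [hxdef, norm_smul]
          simp [hTn]
        have := h x y' hx1 hy'1
        have hval : (inner ℂ (T y') x : ℂ) = (‖T y'‖ : ℂ) := by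
          rw [hxdef, inner_smul_right, inner_self_eq_norm_sq_to_K]
          have hc : (‖T y'‖ : ℂ) ≠ 0 := by exact_mod_cast hTn
          field_simp
          rfl
        rw [hval] at this
        simpa using this
    have hTy : T y = (‖y‖ : ℂ) • T y' := by
      have hc : (‖y‖ : ℂ) ≠ 0 := by exact_mod_cast hyn
      rw [hy', map_smul, smul_smul, mul_inv_cancel₀ hc, one_smul]
    rw [hTy, norm_smul]
    simp only [Complex.norm_real, Real.norm_eq_abs, abs_of_nonneg (norm_nonneg y)]
    rw [mul_comm]
    exact mul_le_mul_of_nonneg_right hTy' (norm_nonneg y)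

end Aux

/-- `max{‖ℑA−ℑB‖, ‖ℜA−ℜB‖} + max{‖ℜA+ℜB‖, ‖ℑA+ℑB‖} ≤ ‖A+B‖ + ‖A−B‖ ≤ 4ω([[O,A],[B*,O]])`. -/
theorem stmt_19 {H : Type*} [NormedAddCommGroup H] [InnerProductSpace ℂ H] [CompleteSpace H]
    (A B : H →L[ℂ] H) :
    max ‖(2 * Complex.I)⁻¹ • (A - adjoint A) - (2 * Complex.I)⁻¹ • (B - adjoint B)‖
          ‖(2 : ℂ)⁻¹ • (A + adjoint A) - (2 : ℂ)⁻¹ • (B + adjoint B)‖ +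
        max ‖(2 : ℂ)⁻¹ • (A + adjoint A) + (2 : ℂ)⁻¹ • (B + adjoint B)‖
          ‖(2 * Complex.I)⁻¹ • (A - adjoint A) + (2 * Complex.I)⁻¹ • (B - adjoint B)‖ ≤
        ‖A + B‖ + ‖A - B‖ ∧
      ‖A + B‖ + ‖A - B‖ ≤ 4 * numRadius (blockOp A (adjoint B)) := by
  constructor
  · have e1 : (2 * Complex.I)⁻¹ • (A - adjoint A) - (2 * Complex.I)⁻¹ • (B - adjoint B)
        = (2 * Complex.I)⁻¹ • ((A - B) - adjoint (A - B)) := by rw [map_sub]; module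
    have e2 : (2 : ℂ)⁻¹ • (A + adjoint A) - (2 : ℂ)⁻¹ • (B + adjoint B)
        = (2 : ℂ)⁻¹ • ((A - B) + adjoint (A - B)) := by rw [map_sub]; module
    have e3 : (2 : ℂ)⁻¹ • (A + adjoint A) + (2 : ℂ)⁻¹ • (B + adjoint B)
        = (2 : ℂ)⁻¹ • ((A + B) + adjoint (A + B)) := by rw [map_add]; module
    have e4 : (2 * Complex.I)⁻¹ • (A - adjoint A) + (2 * Complex.I)⁻¹ • (B - adjoint B)
        = (2 * Complex.I)⁻¹ • ((A + B) - adjoint (A + B)) := by rw [map_add]; module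
    rw [e1, e2, e3, e4]
    have h1 := aux_im_le (A - B)
    have h2 := aux_re_le (A - B)
    have h3 := aux_re_le (A + B)
    have h4 := aux_im_le (A + B)
    have hm1 : max ‖(2 * Complex.I)⁻¹ • ((A - B) - adjoint (A - B))‖
        ‖(2 : ℂ)⁻¹ • ((A - B) + adjoint (A - B))‖ ≤ ‖A - B‖ := max_le h1 h2
    have hm2 : max ‖(2 : ℂ)⁻¹ • ((A + B) + adjoint (A + B))‖
        ‖(2 * Complex.I)⁻¹ • ((A + B) - adjoint (A + B))‖ ≤ ‖A + B‖ := max_le h3 h4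
    linarith
  · set ω := numRadius (blockOp A (adjoint B)) with hω
    have hω0 : 0 ≤ ω := aux_numRadius_nonneg _
    have hsum : ‖A + B‖ ≤ 2 * ω := by
      refine aux_opnorm_le _ _ (by linarith) fun x y hx hy => ?_
      have hkey := aux_key A B hx hy
      calc ‖(inner ℂ ((A + B) y) x : ℂ)‖ = ‖(inner ℂ (A y) x : ℂ) + (inner ℂ (B y) x : ℂ)‖ := by
            simp [inner_add_left]
        _ ≤ ‖(inner ℂ (A y) x : ℂ)‖ + ‖(inner ℂ (B y) x : ℂ)‖ := norm_add_le _ _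
        _ ≤ 2 * ω := hkey
    have hdiff : ‖A - B‖ ≤ 2 * ω := by
      refine aux_opnorm_le _ _ (by linarith) fun x y hx hy => ?_
      have hkey := aux_key A B hx hy
      calc ‖(inner ℂ ((A - B) y) x : ℂ)‖ = ‖(inner ℂ (A y) x : ℂ) - (inner ℂ (B y) x : ℂ)‖ := by
            simp [inner_sub_left]
        _ ≤ ‖(inner ℂ (A y) x : ℂ)‖ + ‖(inner ℂ (B y) x : ℂ)‖ := norm_sub_le _ _
        _ ≤ 2 * ω := hkey
    linarith
end
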